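/- Fix an integer n ≥ 2 and set ζ = 2π/n. Place the bodies at a₀ = 0 ∈ ℂ with mass m₀ = μ ≥ 0 and aⱼ = e^{ijζ} ∈ ℂ with mass mⱼ = 1 for j ∈ {1,…,n}. Set s₁ = (1/4)·∑_{l=1}^{n−1} 1/sin(lπ/n) and ω = μ + s₁. Then the configuration (a₀,…,aₙ) is a relative equilibrium with frequency ω: for every j ∈ {0,1,…,n}, ω·aⱼ = ∑_{i=0, i≠j}^{n} mᵢ·(aⱼ − aᵢ)/|aⱼ − aᵢ|³. (This is Maxwell's Saturn ring configuration.) -/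

import Mathlib

open Finset

lemma aux_exp (θ : ℝ) : 1 - Complex.exp (Complex.I*(2*θ)) =
    ((2 * Real.sin θ : ℝ) : ℂ) * ((Real.sin θ : ℂ) - (Real.cos θ : ℂ) * Complex.I) := by
  have h : (Complex.I * (2*(θ:ℂ))) = ((2*θ : ℝ):ℂ) * Complex.I := by push_cast; ring
  rw [h, Complex.exp_mul_I]
  rw [← Complex.ofReal_cos, ← Complex.ofReal_sin]
  rw [Real.cos_two_mul', Real.sin_two_mul]
  push_cast
  linear_combination (-(Complex.sin_sq_add_cos_sq (θ:ℂ)))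

lemma aux_abs (θ : ℝ) (h : 0 < Real.sin θ) :
    ‖1 - Complex.exp (Complex.I*(2*θ))‖ = 2 * Real.sin θ := by
  rw [aux_exp, norm_mul]
  have h1 : (Real.sin θ : ℂ) - (Real.cos θ : ℂ) * Complex.I
      = ((Real.sin θ : ℝ) : ℂ) + ((-Real.cos θ : ℝ) : ℂ) * Complex.I := by push_cast; ring
  rw [h1, Complex.norm_add_mul_I, Complex.norm_real, Real.norm_eq_abs]
  have : Real.sin θ ^ 2 + (-Real.cos θ) ^ 2 = 1 := by
    have := Real.sin_sq_add_cos_sq θ; nlinarith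
  rw [this, Real.sqrt_one, abs_of_pos (by positivity)]
  ring

lemma aux_T (θ : ℝ) (h : 0 < Real.sin θ) :
    (1 - Complex.exp (Complex.I*(2*θ))) / ((‖1 - Complex.exp (Complex.I*(2*θ))‖ : ℝ) : ℂ)^3
    = ((1/(4*Real.sin θ) : ℝ) : ℂ) - ((Real.cos θ / (4 * Real.sin θ^2) : ℝ) : ℂ) * Complex.I := by
  rw [aux_abs θ h, aux_exp]
  have hs : Complex.sin (θ:ℂ) ≠ 0 := by
    rw [← Complex.ofReal_sin]; exact_mod_cast ne_of_gt h
  push_cast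
  field_simp
  ring

lemma aux_cos_sum (n : ℕ) (hn : 2 ≤ n) :
    ∑ k ∈ Finset.Ico 1 n, Real.cos (k*Real.pi/n) / (4 * Real.sin (k*Real.pi/n)^2) = 0 := by
  have hn0 : (n:ℝ) ≠ 0 := by positivity
  refine Finset.sum_involution (fun k _ => n - k) ?_ ?_ ?_ ?_
  · intro k hk
    simp only [Finset.mem_Ico] at hk
    have hkn : k ≤ n := hk.2.le
    have harg : ((n - k : ℕ) : ℝ) * Real.pi / n = Real.pi - k * Real.pi / n := by
      rw [Nat.cast_sub hkn]; field_simp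
    rw [harg, Real.cos_pi_sub, Real.sin_pi_sub]
    ring
  · intro k hk hfk
    simp only [Finset.mem_Ico] at hk
    intro hgk
    apply hfk
    have hgk' : n - k = k := hgk
    have h2k : 2 * k = n := by omega
    have hk0 : (k:ℝ) ≠ 0 := by
      have : 1 ≤ k := hk.1
      positivity
    have harg : (k : ℝ) * Real.pi / n = Real.pi / 2 := by
      have hnr : (n:ℝ) = 2*k := by exact_mod_cast h2k.symm
      rw [hnr]; field_simp
    rw [harg, Real.cos_pi_div_two]
    simp
  · intro k hk
    simp only [Finset.mem_Ico] at hk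
    show n - k ∈ Finset.Ico 1 n
    simp only [Finset.mem_Ico]
    omega
  · intro k hk
    simp only [Finset.mem_Ico] at hk
    show n - (n - k) = k
    omega

lemma aux_ring_sum (n : ℕ) (hn : 2 ≤ n) (ζ : ℝ) (hζ : ζ = 2*Real.pi/n) :
    ∑ k ∈ Finset.Ico 1 n, (1 - Complex.exp (Complex.I * k * ζ)) /
        ((‖1 - Complex.exp (Complex.I * k * ζ)‖ : ℝ) : ℂ)^3
    = (((1/4) * ∑ l ∈ Finset.Ico 1 n, 1 / Real.sin (l * Real.pi / n) : ℝ) : ℂ) := by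
  have hn0 : (n:ℝ) ≠ 0 := by positivity
  have hterm : ∀ k ∈ Finset.Ico 1 n,
      (1 - Complex.exp (Complex.I * k * ζ)) /
        ((‖1 - Complex.exp (Complex.I * k * ζ)‖ : ℝ) : ℂ)^3
      = ((1/(4*Real.sin (k*Real.pi/n)) : ℝ) : ℂ)
        - ((Real.cos (k*Real.pi/n) / (4 * Real.sin (k*Real.pi/n)^2) : ℝ) : ℂ) * Complex.I := by
    intro k hk
    simp only [Finset.mem_Ico] at hk
    have harg : Complex.I * k * ζ = Complex.I * (2 * ((k*Real.pi/n : ℝ) : ℂ)) := by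
      rw [hζ]; push_cast; field_simp
    have hsin : 0 < Real.sin (k*Real.pi/n) := by
      apply Real.sin_pos_of_pos_of_lt_pi
      · have hk1 : (1:ℝ) ≤ k := by exact_mod_cast hk.1
        have : (0:ℝ) < n := by positivity
        positivity
      · rw [div_lt_iff₀ (by positivity)]
        have hkn : (k:ℝ) < n := by exact_mod_cast hk.2
        nlinarith [Real.pi_pos]
    rw [harg]
    exact aux_T _ hsin
  rw [Finset.sum_congr rfl hterm, Finset.sum_sub_distrib, ← Finset.sum_mul]
  have h2 : ∑ k ∈ Finset.Ico 1 n,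
      ((Real.cos (k*Real.pi/n) / (4 * Real.sin (k*Real.pi/n)^2) : ℝ) : ℂ) = 0 := by
    rw [← Complex.ofReal_sum, aux_cos_sum n hn, Complex.ofReal_zero]
  rw [h2, zero_mul, sub_zero, ← Complex.ofReal_sum]
  norm_cast
  rw [Finset.mul_sum]
  apply Finset.sum_congr rfl
  intro k _
  rw [one_div, one_div, mul_inv]
  ring

/-- **Maxwell's Saturn ring.** For `n ≥ 2`, the configuration of a central
body of mass `μ ≥ 0` at the origin and `n` bodies of mass `1` at the vertices
`aⱼ = e^{ijζ}` (`ζ = 2π/n`) of a regular `n`-gon is a relative equilibrium with frequency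
`ω = μ + s₁`, where `s₁ = (1/4) ∑_{l=1}^{n-1} 1/sin(lπ/n)`:  for every `j`,
`ω·aⱼ = ∑_{i ≠ j} mᵢ (aⱼ - aᵢ)/|aⱼ - aᵢ|³`. -/
theorem maxwell_ring_relative_equilibrium
    (n : ℕ) (hn : 2 ≤ n) (μ : ℝ) (hμ : 0 ≤ μ)
    (ζ : ℝ) (hζ : ζ = 2 * Real.pi / n)
    (a : Fin (n + 1) → ℂ) (ha0 : a 0 = 0)
    (ha : ∀ j : Fin (n + 1), j ≠ 0 →
      a j = Complex.exp (Complex.I * ((j : ℕ) : ℂ) * (ζ : ℂ)))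
    (m : Fin (n + 1) → ℝ) (hm0 : m 0 = μ)
    (hm : ∀ j : Fin (n + 1), j ≠ 0 → m j = 1)
    (s₁ : ℝ)
    (hs₁ : s₁ = (1 / 4) * ∑ l ∈ Finset.Ico 1 n, 1 / Real.sin (l * Real.pi / n))
    (ω : ℝ) (hω : ω = μ + s₁) :
    ∀ j : Fin (n + 1), (ω : ℂ) * a j =
      ∑ i ∈ Finset.univ.erase j,
        ((m i : ℂ) * (a j - a i)) / ((‖a j - a i‖ : ℝ) : ℂ) ^ 3 := by
  intro j
  have hn0 : (n:ℝ) ≠ 0 := by positivity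
  set E : ℕ → ℂ := fun k => Complex.exp (Complex.I * (k:ℂ) * (ζ:ℂ)) with hE
  set A : ℕ → ℂ := fun i => if i = 0 then 0 else E i with hA
  set M : ℕ → ℝ := fun i => if i = 0 then μ else 1 with hM
  set F : ℕ → ℂ := fun i =>
    ((M i : ℂ) * (A j.val - A i)) / ((‖A j.val - A i‖ : ℝ) : ℂ)^3 with hF
  have habsE : ∀ k : ℕ, ‖E k‖ = 1 := by
    intro k
    have : Complex.I * (k:ℂ) * (ζ:ℂ) = ((k*ζ : ℝ):ℂ) * Complex.I := by push_cast; ring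
    simp only [hE, this, Complex.norm_exp_ofReal_mul_I]
  have hEadd : ∀ p q : ℕ, E (p + q) = E p * E q := by
    intro p q
    simp only [hE]
    rw [← Complex.exp_add]
    congr 1
    push_cast; ring
  have hEn : E n = 1 := by
    have h1 : Complex.I * (n:ℂ) * (ζ:ℂ) = 2*(Real.pi:ℂ)*Complex.I := by
      have hnC : (n:ℂ) ≠ 0 := by exact_mod_cast hn0
      rw [hζ]; push_cast; field_simp
    simp only [hE]
    rw [h1, Complex.exp_two_pi_mul_I]
  have hav : ∀ i : Fin (n+1), a i = A i.val := by
    intro i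
    by_cases h : i = 0
    · subst h; simpa [hA] using ha0
    · have hv : i.val ≠ 0 := by intro h'; exact h (Fin.ext (by simp [h']))
      rw [ha i h]; simp [hA, hv]; rfl
  have hmv : ∀ i : Fin (n+1), m i = M i.val := by
    intro i
    by_cases h : i = 0
    · subst h; simpa [hM] using hm0
    · have hv : i.val ≠ 0 := by intro h'; exact h (Fin.ext (by simp [h']))
      rw [hm i h]; simp [hM, hv]
  have hsum : ∑ i ∈ Finset.univ.erase j,
      ((m i : ℂ) * (a j - a i)) / ((‖a j - a i‖ : ℝ) : ℂ)^3
      = (∑ i ∈ Finset.range (n+1), F i) - F j.val := by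
    rw [Finset.sum_erase_eq_sub (Finset.mem_univ j)]
    congr 1
    · rw [← Fin.sum_univ_eq_sum_range F (n+1)]
      apply Finset.sum_congr rfl
      intro i _
      rw [hmv i, hav i, hav j]
    · rw [hmv j, hav j]
  have hFj : F j.val = 0 := by simp [hF]
  rw [hsum, hFj, sub_zero, hav j]
  rw [Finset.range_eq_Ico, Finset.sum_eq_sum_Ico_succ_bot (by omega : 0 < n+1) F]
  have hzero1 : (0:ℕ)+1 = 1 := rfl
  rw [hzero1]
  by_cases hj : j.val = 0
  · -- central body case
    rw [hj]
    have hA0 : A 0 = 0 := by simp [hA]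
    have hF0 : F 0 = 0 := by simp [hF, hj]
    have hFneg : ∀ i ∈ Finset.Ico 1 (n+1), F i = -(E i) := by
      intro i hi
      simp only [Finset.mem_Ico] at hi
      have hi0 : i ≠ 0 := by omega
      simp only [hF, hA, hM, if_neg hi0, hj, if_pos rfl, Complex.ofReal_one, one_mul,
        zero_sub, norm_neg, habsE, Complex.ofReal_one, one_pow, div_one]
    have hEpow : ∀ k : ℕ, E k = (E 1)^k := by
      intro k
      simp only [hE]
      rw [← Complex.exp_nat_mul]
      congr 1
      push_cast; ring
    have hz1 : E 1 ≠ 1 := by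
      intro h
      simp only [hE] at h
      rw [Complex.exp_eq_one_iff] at h
      obtain ⟨k, hk⟩ := h
      have him := congrArg Complex.im hk
      simp [Complex.mul_im, Complex.mul_re] at him
      -- him should say ζ = k * (2π) (up to form)
      have hπ := Real.pi_pos
      have h2n : (2:ℝ) ≤ n := by exact_mod_cast hn
      have hζpos : 0 < ζ := by rw [hζ]; positivity
      have hζle : ζ ≤ Real.pi := by
        rw [hζ, div_le_iff₀ (by positivity)]
        nlinarith
      rcases le_or_gt (k:ℝ) 0 with hk0 | hk0
      · nlinarith [him]
      · have hk1 : (1:ℝ) ≤ k := by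
          have : (1:ℤ) ≤ k := by exact_mod_cast hk0
          exact_mod_cast this
        nlinarith [him]
    have hEsum : ∑ i ∈ Finset.Ico 1 (n+1), E i = 0 := by
      have hpow : (E 1)^n = 1 := by rw [← hEpow n, hEn]
      have h1 : ∑ i ∈ Finset.Ico 1 (n+1), E i = ∑ i ∈ Finset.range n, E (1+i) := by
        rw [Finset.sum_Ico_eq_sum_range]
        norm_num
      rw [h1]
      have h2 : ∀ i ∈ Finset.range n, E (1+i) = E 1 * (E 1)^i := by
        intro i _
        rw [hEadd 1 i, ← hEpow i]
      rw [Finset.sum_congr rfl h2, ← Finset.mul_sum, geom_sum_eq hz1, hpow]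
      simp
    rw [hF0, hA0, Finset.sum_congr rfl hFneg, Finset.sum_neg_distrib, hEsum]
    simp
  · -- ring body case
    have hj1 : 1 ≤ j.val := by omega
    have hjn : j.val ≤ n := by have := j.isLt; omega
    have hAj : A j.val = E j.val := by simp [hA, hj]
    set G : ℕ → ℂ := fun i =>
      (E j.val - E i) / ((‖E j.val - E i‖ : ℝ) : ℂ)^3 with hG
    have hFG : ∀ i, i ≠ 0 → F i = G i := by
      intro i hi
      simp only [hF, hG, hA, hM, if_neg hi, if_neg hj, Complex.ofReal_one, one_mul]
    have hGper : ∀ l, G (l + n) = G l := by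
      intro l
      simp only [hG, hEadd l n, hEn, mul_one]
    have hF0 : F 0 = (μ:ℂ) * E j.val := by
      simp [hF, hA, hM, hj, habsE]
    have hGj : G j.val = 0 := by simp [hG]
    have e1 : ∑ i ∈ Finset.Ico 1 (n+1), F i = ∑ i ∈ Finset.Ico 1 (n+1), G i := by
      apply Finset.sum_congr rfl
      intro i hi
      simp only [Finset.mem_Ico] at hi
      exact hFG i (by omega)
    have e2 : ∑ i ∈ Finset.Ico 1 (n+1), G i
        = ∑ i ∈ Finset.Ico 1 j.val, G i + ∑ i ∈ Finset.Ico j.val (n+1), G i :=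
      (Finset.sum_Ico_consecutive _ hj1 (by omega)).symm
    have e3 : ∑ i ∈ Finset.Ico j.val (n+1), G i
        = G j.val + ∑ i ∈ Finset.Ico (j.val+1) (n+1), G i :=
      Finset.sum_eq_sum_Ico_succ_bot (by omega) G
    have e4 : ∑ k ∈ Finset.Ico 1 (n+1-j.val), G (j.val + k)
        = ∑ i ∈ Finset.Ico (j.val+1) (n+1), G i := by
      rw [Finset.sum_Ico_add G 1 (n+1-j.val) j.val,
        show 1 + j.val = j.val + 1 by omega, show n+1-j.val+j.val = n+1 by omega]
    have e5 : ∑ k ∈ Finset.Ico (n+1-j.val) n, G (j.val + k)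
        = ∑ i ∈ Finset.Ico 1 j.val, G i := by
      have h := Finset.sum_Ico_add (fun k => G (j.val + k)) 1 j.val (n - j.val)
      have hb1 : 1 + (n - j.val) = n+1-j.val := by omega
      have hb2 : j.val + (n - j.val) = n := by omega
      rw [hb1, hb2] at h
      rw [← h]
      apply Finset.sum_congr rfl
      intro l hl
      have harg : j.val + (n - j.val + l) = l + n := by omega
      show G (j.val + (n - j.val + l)) = G l
      rw [harg, hGper]
    have e6 : ∑ k ∈ Finset.Ico 1 n, G (j.val + k)
        = ∑ k ∈ Finset.Ico 1 (n+1-j.val), G (j.val + k)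
          + ∑ k ∈ Finset.Ico (n+1-j.val) n, G (j.val + k) :=
      (Finset.sum_Ico_consecutive _ (by omega) (by omega)).symm
    have e7 : ∀ k ∈ Finset.Ico 1 n, G (j.val + k)
        = E j.val * ((1 - E k) / ((‖1 - E k‖ : ℝ) : ℂ)^3) := by
      intro k hk
      simp only [hG, hEadd j.val k]
      have h2 : E j.val - E j.val * E k = E j.val * (1 - E k) := by ring
      rw [h2, norm_mul, habsE, one_mul, mul_div_assoc]
    have key : ∑ i ∈ Finset.Ico 1 (n+1), F i = E j.val * (s₁:ℂ) := by
      rw [e1, e2, e3, hGj, zero_add, ← e4, ← e5,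
        add_comm (∑ k ∈ Finset.Ico (n+1-j.val) n, G (j.val + k)), ← e6,
        Finset.sum_congr rfl e7, ← Finset.mul_sum]
      congr 1
      rw [hs₁]
      exact aux_ring_sum n hn ζ hζ
    rw [key, hF0, hAj, hω]
    push_cast
    ring
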